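/- The rank of a vector C = (c₁,…,c_σ) of nonnegative integers with sum n in lexicographic order equals ∑_{d=1}^{σ-1} ∑_{j=0}^{c_d−1} K(σ−d, ℓ_d − j), where ℓ_d = n − (c₁+…+c_{d−1}) and K(m,s) = binomial(s+m−1, m−1). -/

import Mathlib

/-- Lexicographic strict order on vectors, first coordinate most significant. -/
def lexLt {σ : ℕ} (f g : Fin σ → ℕ) : Prop :=
  ∃ d : Fin σ, (∀ e, e < d → f e = g e) ∧ f d < g d

/-- `K m s` is the number of `m`-dimensional nonnegative integer vectors summing to `s`. -/
def K (m s : ℕ) : ℕ := Nat.choose (s + m - 1) (m - 1)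

open Finset

instance lexLt.dec {σ : ℕ} (f g : Fin σ → ℕ) : Decidable (lexLt f g) := by
  unfold lexLt; infer_instance

/-- Tuples of length `k` summing to `n`. -/
abbrev T (k n : ℕ) : Finset (Fin k → ℕ) := Finset.Nat.antidiagonalTuple k n

lemma mem_T {k n : ℕ} {f : Fin k → ℕ} : f ∈ T k n ↔ ∑ i, f i = n :=
  Finset.Nat.mem_antidiagonalTuple

/-- Fibers over the first coordinate. -/
lemma fiber_card (k n j : ℕ) (hj : j ≤ n) (q : (Fin k → ℕ) → Prop) [DecidablePred q] :
    ((T (k+1) n).filter (fun D => D 0 = j ∧ q (Fin.tail D))).card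
      = ((T k (n - j)).filter q).card := by
  apply Finset.card_nbij' (fun D => Fin.tail D) (fun g => Fin.cons j g)
  · intro D hD
    simp only [mem_coe, mem_filter, mem_T] at hD ⊢
    obtain ⟨hsum, h0, hq⟩ := hD
    refine ⟨?_, hq⟩
    have := Fin.sum_univ_succ D
    have ht : ∑ i : Fin k, Fin.tail D i = ∑ i : Fin k, D i.succ := rfl
    omega
  · intro g hg
    simp only [mem_coe, mem_filter, mem_T] at hg ⊢
    obtain ⟨hsum, hq⟩ := hg
    refine ⟨?_, ?_, ?_⟩
    · rw [Fin.sum_cons, hsum]; omega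
    · simp
    · simpa using hq
  · intro D hD
    simp only [mem_coe, mem_filter] at hD
    rw [← hD.2.1]
    exact Fin.cons_self_tail D
  · intro g _
    simp

lemma card_T (k n : ℕ) : (T (k+1) n).card = (n + k).choose k := by
  induction k generalizing n with
  | zero => simp [Finset.Nat.antidiagonalTuple_one]
  | succ k ih =>
    have h1 := Finset.card_eq_sum_card_fiberwise (s := T (k+2) n) (t := range (n+1))
      (f := fun D : Fin (k+2) → ℕ => D 0)
      (by
        intro D hD
        rw [mem_coe, mem_T] at hD
        have : D 0 ≤ ∑ i, D i := Finset.single_le_sum (fun i _ => Nat.zero_le _) (mem_univ 0)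
        simp only [mem_coe, mem_range]; omega)
    rw [h1]
    have h2 : ∀ j ∈ range (n+1),
        ((T (k+2) n).filter (fun D => D 0 = j)).card = (n - j + k).choose k := by
      intro j hj
      rw [mem_range] at hj
      have heq : ((T (k+2) n).filter (fun D => D 0 = j))
          = ((T (k+2) n).filter (fun D => D 0 = j ∧ (fun _ => True) (Fin.tail D))) := by
        apply filter_congr; intro D _; simp
      have h4 := fiber_card (k+1) n j (by clear * - hj; omega) (fun _ => True)
      rw [Finset.filter_true] at h4
      rw [heq, h4, ih]
    rw [Finset.sum_congr rfl h2]
    have h5 : ∑ j ∈ range (n+1), (n - j + k).choose k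
        = ∑ j ∈ range (n+1), (j + k).choose k := by
      rw [← Finset.sum_range_reflect]
      apply Finset.sum_congr rfl
      intro j hj
      rw [mem_range] at hj
      clear * - hj
      congr 2
      omega
    rw [h5, Nat.sum_range_add_choose]
    congr 1

lemma lexLt_succ {k : ℕ} (D C : Fin (k+1) → ℕ) :
    lexLt D C ↔ D 0 < C 0 ∨ (D 0 = C 0 ∧ lexLt (Fin.tail D) (Fin.tail C)) := by
  constructor
  · rintro ⟨d, hlt, hd⟩
    induction d using Fin.cases with
    | zero => exact Or.inl hd
    | succ d =>
      right
      refine ⟨hlt 0 (Fin.succ_pos d), ⟨d, ?_, hd⟩⟩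
      intro e he
      exact hlt e.succ (by simpa [Fin.succ_lt_succ_iff] using he)
  · rintro (h | ⟨h0, d, hlt, hd⟩)
    · exact ⟨0, fun e he => absurd he (Fin.not_lt_zero e), h⟩
    · refine ⟨d.succ, ?_, hd⟩
      intro e he
      induction e using Fin.cases with
      | zero => exact h0
      | succ e => exact hlt e (by simpa [Fin.succ_lt_succ_iff] using he)

lemma main_lemma : ∀ (k n : ℕ) (C : Fin (k+1) → ℕ), (∑ i, C i = n) →
    ((T (k+1) n).filter (fun D => lexLt D C)).card =
      ∑ d ∈ Finset.univ.filter (fun d : Fin (k+1) => (d : ℕ) + 1 < k+1),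
        ∑ j ∈ Finset.range (C d),
          K ((k+1) - ((d : ℕ) + 1))
            ((n - ∑ e ∈ Finset.univ.filter (fun e : Fin (k+1) => e < d), C e) - j) := by
  intro k
  induction k with
  | zero =>
    intro n C hC
    have hC0 : C 0 = n := by simpa using hC
    have hL : ((T 1 n).filter (fun D => lexLt D C)) = ∅ := by
      apply Finset.filter_false_of_mem
      intro D hD
      rw [mem_T, Fin.sum_univ_one] at hD
      rintro ⟨d, _, hd⟩
      have hd0 : d = 0 := Fin.eq_zero d
      rw [hd0] at hd; omega
    have hR : (Finset.univ.filter (fun d : Fin 1 => (d : ℕ) + 1 < 1)) = ∅ := by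
      apply Finset.filter_false_of_mem; intro d _; omega
    rw [hL, hR]; simp
  | succ k ih =>
    intro n C hC
    have hC0n : C 0 ≤ n := by
      rw [← hC]; exact Finset.single_le_sum (fun i _ => Nat.zero_le _) (mem_univ 0)
    have htail : ∑ i : Fin (k+1), Fin.tail C i = n - C 0 := by
      have := Fin.sum_univ_succ C
      have ht : ∑ i : Fin (k+1), Fin.tail C i = ∑ i : Fin (k+1), C i.succ := rfl
      omega
    -- split LHS
    have hsplit : ((T (k+2) n).filter (fun D => lexLt D C))
        = ((T (k+2) n).filter (fun D => D 0 < C 0)) ∪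
          ((T (k+2) n).filter (fun D => D 0 = C 0 ∧ lexLt (Fin.tail D) (Fin.tail C))) := by
      rw [← Finset.filter_or]
      apply filter_congr
      intro D _
      simpa using lexLt_succ D C
    have hdisj : Disjoint ((T (k+2) n).filter (fun D => D 0 < C 0))
        ((T (k+2) n).filter (fun D => D 0 = C 0 ∧ lexLt (Fin.tail D) (Fin.tail C))) := by
      rw [Finset.disjoint_filter]
      rintro D _ h1 ⟨h2, _⟩; omega
    rw [hsplit, Finset.card_union_of_disjoint hdisj]
    -- Part A
    have hA : ((T (k+2) n).filter (fun D => D 0 < C 0)).card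
        = ∑ j ∈ range (C 0), K (k+1) (n - j) := by
      have h1 := Finset.card_eq_sum_card_fiberwise
        (s := (T (k+2) n).filter (fun D => D 0 < C 0)) (t := range (C 0))
        (f := fun D : Fin (k+2) → ℕ => D 0)
        (by
          intro D hD
          rw [mem_coe, mem_filter] at hD
          simpa using hD.2)
      rw [h1]
      apply Finset.sum_congr rfl
      intro j hj
      rw [mem_range] at hj
      have h2 : (((T (k+2) n).filter (fun D => D 0 < C 0)).filter (fun D => D 0 = j))
          = ((T (k+2) n).filter (fun D => D 0 = j ∧ (fun _ => True) (Fin.tail D))) := by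
        rw [Finset.filter_filter]
        apply filter_congr
        intro D _
        constructor
        · rintro ⟨_, h⟩; exact ⟨h, trivial⟩
        · rintro ⟨h, _⟩; exact ⟨by clear * - h hj; omega, h⟩
      have h4 := fiber_card (k+1) n j (by clear * - hj hC0n; omega) (fun _ => True)
      rw [Finset.filter_true] at h4
      rw [h2, h4, card_T]
      show (n - j + k).choose k = K (k+1) (n - j)
      simp [K]
    -- Part B
    have hB : ((T (k+2) n).filter (fun D => D 0 = C 0 ∧ lexLt (Fin.tail D) (Fin.tail C))).card
        = ((T (k+1) (n - C 0)).filter (fun g => lexLt g (Fin.tail C))).card :=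
      fiber_card (k+1) n (C 0) hC0n (fun g => lexLt g (Fin.tail C))
    rw [hA, hB, ih (n - C 0) (Fin.tail C) htail]
    -- Now the RHS identity
    symm
    rw [Finset.sum_filter (s := (Finset.univ : Finset (Fin (k+2))))]
    rw [Fin.sum_univ_succ (f := fun d : Fin (k+2) =>
      if (d : ℕ) + 1 < k+1+1 then
        ∑ j ∈ Finset.range (C d),
          K ((k+1+1) - ((d : ℕ) + 1))
            ((n - ∑ e ∈ Finset.univ.filter (fun e : Fin (k+2) => e < d), C e) - j)
      else 0)]
    have hzero : (Finset.univ.filter (fun e : Fin (k+2) => e < 0)) = ∅ := by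
      apply Finset.filter_false_of_mem; intro e _; exact Fin.not_lt_zero e
    congr 1
    · rw [if_pos (by simp)]
      rw [hzero]
      apply Finset.sum_congr rfl
      intro j _
      simp [K]
    · rw [Finset.sum_filter (s := (Finset.univ : Finset (Fin (k+1))))]
      apply Finset.sum_congr rfl
      intro d _
      have hcond : (((d.succ : Fin (k+2)) : ℕ) + 1 < k + 1 + 1) ↔ ((d : ℕ) + 1 < k + 1) := by
        simp [Fin.val_succ]
      have hsum_succ : ∑ e ∈ Finset.univ.filter (fun e : Fin (k+2) => e < d.succ), C e
          = C 0 + ∑ e ∈ Finset.univ.filter (fun e : Fin (k+1) => e < d), Fin.tail C e := by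
        rw [Finset.sum_filter (s := (Finset.univ : Finset (Fin (k+2))))]
        rw [Fin.sum_univ_succ (f := fun e : Fin (k+2) => if e < d.succ then C e else 0)]
        rw [if_pos (Fin.succ_pos d)]
        congr 1
        rw [Finset.sum_filter (s := (Finset.univ : Finset (Fin (k+1))))]
        apply Finset.sum_congr rfl
        intro e _
        exact if_congr Fin.succ_lt_succ_iff rfl rfl
      have hdim : (k+1+1) - (((d.succ : Fin (k+2)) : ℕ) + 1) = (k+1) - ((d : ℕ) + 1) := by
        clear * -
        simp only [Fin.val_succ]
        omega
      have hCtail : C d.succ = Fin.tail C d := rfl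
      by_cases hc : (d : ℕ) + 1 < k + 1
      · rw [if_pos (hcond.mpr hc), if_pos hc]
        apply Finset.sum_congr (by rw [hCtail])
        intro j _
        rw [hdim, hsum_succ]
        congr 1
        clear * -
        omega
      · rw [if_neg (by rw [hcond]; exact hc), if_neg hc]

theorem rank_formula (σ n : ℕ) (hσ : 1 ≤ σ) (C : Fin σ → ℕ)
    (hC : ∑ i, C i = n) :
    Nat.card {D : {f : Fin σ → ℕ // ∑ i, f i = n} // lexLt D.1 C} =
      ∑ d ∈ Finset.univ.filter (fun d : Fin σ => (d : ℕ) + 1 < σ),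
        ∑ j ∈ Finset.range (C d),
          K (σ - ((d : ℕ) + 1))
            ((n - ∑ e ∈ Finset.univ.filter (fun e : Fin σ => e < d), C e) - j) := by
  obtain ⟨k, rfl⟩ := Nat.exists_eq_succ_of_ne_zero (by omega : σ ≠ 0)
  have e : {D : {f : Fin (k+1) → ℕ // ∑ i, f i = n} // lexLt D.1 C} ≃
      {x // x ∈ (T (k+1) n).filter (fun D => lexLt D C)} :=
    { toFun := fun D => ⟨D.1.1, by rw [mem_filter, mem_T]; exact ⟨D.1.2, D.2⟩⟩
      invFun := fun x => ⟨⟨x.1, mem_T.mp (mem_filter.mp x.2).1⟩, (mem_filter.mp x.2).2⟩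
      left_inv := fun _ => rfl
      right_inv := fun _ => rfl }
  rw [Nat.card_congr e, Nat.card_eq_fintype_card, Fintype.card_coe]
  exact main_lemma k n C hC
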